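/- Let n be a positive integer, λ > 0, ε ≥ 0, and 0 < m̲ ≤ m̄. Let M : [0,∞) → (n×n real symmetric matrices) be differentiable with m̲I ⪯ M(t) ⪯ m̄I for all t, let 𝒜 : [0,∞) → ℝ^{n×n} satisfy M(t)𝒜(t) + 𝒜(t)ᵀM(t) + M'(t) ⪯ −2λ·M(t) for all t, and let δ : [0,∞) → ℝ^n be differentiable with δ'(t) = 𝒜(t)δ(t) + d(t) where ‖d(t)‖ ≤ ε for all t. Then for every t ≥ 0, ‖δ(t)‖ ≤ √(m̄/m̲)·( e^{−λt}‖δ(0)‖ + ε/λ ). -/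

import Mathlib

open Matrix Set

noncomputable def euclNorm {ι : Type*} [Fintype ι] (v : ι → ℝ) : ℝ := Real.sqrt (v ⬝ᵥ v)

section aux

variable {n : ℕ}

lemma dot_self_nonneg (x : Fin n → ℝ) : 0 ≤ x ⬝ᵥ x := by
  simp only [dotProduct]
  exact Finset.sum_nonneg fun i _ => mul_self_nonneg _

lemma psd_dot_nonneg {Q : Matrix (Fin n) (Fin n) ℝ} (hQ : Q.PosSemidef) (x : Fin n → ℝ) :
    0 ≤ x ⬝ᵥ (Q *ᵥ x) := by simpa using hQ.dotProduct_mulVec_nonneg x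

lemma dot_cs {Q : Matrix (Fin n) (Fin n) ℝ} (hQ : Q.PosSemidef) (x y : Fin n → ℝ) :
    (x ⬝ᵥ (Q *ᵥ y)) ^ 2 ≤ (x ⬝ᵥ (Q *ᵥ x)) * (y ⬝ᵥ (Q *ᵥ y)) := by
  have hT : Qᵀ = Q := by
    have h := hQ.1
    ext i j
    simpa using congrFun (congrFun h i) j
  have hyx : y ⬝ᵥ (Q *ᵥ x) = x ⬝ᵥ (Q *ᵥ y) := by
    rw [dotProduct_mulVec, ← mulVec_transpose, hT, dotProduct_comm]
  have key : ∀ s : ℝ, 0 ≤ (y ⬝ᵥ (Q *ᵥ y)) * (s * s) + 2 * (x ⬝ᵥ (Q *ᵥ y)) * s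
      + x ⬝ᵥ (Q *ᵥ x) := by
    intro s
    have h := hQ.dotProduct_mulVec_nonneg (x + s • y)
    simp only [star_trivial, mulVec_add, mulVec_smul, dotProduct_add, add_dotProduct,
      dotProduct_smul, smul_dotProduct, smul_eq_mul, hyx] at h
    nlinarith [h]
  have hd := discrim_le_zero key
  unfold discrim at hd
  nlinarith [hd]

end aux

lemma sqrt_tube {V V' : ℝ → ℝ} {lam A T : ℝ} (hlam : 0 < lam) (hA : 0 ≤ A) (hT : 0 ≤ T)
    (hVnn : ∀ t, 0 ≤ t → 0 ≤ V t)
    (hVderiv : ∀ t, 0 ≤ t → HasDerivWithinAt V (V' t) (Set.Ici (0 : ℝ)) t)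
    (hbound : ∀ t, 0 ≤ t → V' t ≤ -(2 * lam) * V t + 2 * A * Real.sqrt (V t)) :
    Real.sqrt (V T) ≤ Real.exp (-lam * T) * Real.sqrt (V 0) + A / lam := by
  have key : ∀ η : ℝ, 0 < η →
      Real.sqrt (V T) ≤ Real.exp (-lam * T) * Real.sqrt (V 0) + A / lam
        + 2 * Real.sqrt η := by
    intro η hη
    have hfderiv : ∀ s, 0 ≤ s → HasDerivWithinAt (fun u => Real.sqrt (V u + η))
        (V' s / (2 * Real.sqrt (V s + η))) (Set.Ici (0 : ℝ)) s := by
      intro s hs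
      have hVs := hVnn s hs
      have hne : V s + η ≠ 0 := by positivity
      have hin : HasDerivWithinAt (fun u => V u + η) (V' s) (Set.Ici (0 : ℝ)) s :=
        (hVderiv s hs).add_const η
      have hcomp := (Real.hasDerivAt_sqrt hne).comp_hasDerivWithinAt s hin
      have hval : V' s / (2 * Real.sqrt (V s + η))
          = 1 / (2 * Real.sqrt (V s + η)) * V' s := by ring
      rw [hval]
      exact hcomp
    have hfcont : ContinuousOn (fun u => Real.sqrt (V u + η)) (Icc (0 : ℝ) T) := by
      intro s hs
      exact ((hfderiv s hs.1).continuousWithinAt).mono (fun x hx => hx.1)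
    have hfderiv' : ∀ s ∈ Ico (0 : ℝ) T,
        HasDerivWithinAt (fun u => Real.sqrt (V u + η))
          (V' s / (2 * Real.sqrt (V s + η))) (Ici s) s := by
      intro s hs
      exact (hfderiv s hs.1).mono (Ici_subset_Ici.2 hs.1)
    have hfbound : ∀ s ∈ Ico (0 : ℝ) T,
        V' s / (2 * Real.sqrt (V s + η)) ≤
          (-lam) * Real.sqrt (V s + η) + (A + lam * Real.sqrt η) := by
      intro s hs
      have hs0 := hs.1
      have hVs := hVnn s hs0
      have hfs : 0 < Real.sqrt (V s + η) := Real.sqrt_pos.2 (by linarith)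
      have hV's := hbound s hs0
      set r : ℝ := Real.sqrt (V s) with hrdef
      set g : ℝ := Real.sqrt (V s + η) with hgdef
      have hr2 : r * r = V s := Real.mul_self_sqrt hVs
      have hf2 : g * g = V s + η := Real.mul_self_sqrt (by positivity)
      have hrf : r ≤ g := Real.sqrt_le_sqrt (by linarith)
      have hrnn : 0 ≤ r := Real.sqrt_nonneg _
      have hse : Real.sqrt η ≤ g := Real.sqrt_le_sqrt (by linarith)
      have hsq : Real.sqrt η * Real.sqrt η = η := Real.mul_self_sqrt hη.le
      rw [div_le_iff₀ (by positivity)]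
      have hVle : V' s ≤ -(2 * lam) * (r * r) + 2 * A * r := by
        rw [hr2]; exact hV's
      refine le_trans hVle ?_
      nlinarith [mul_nonneg hA (sub_nonneg.2 hrf),
        mul_nonneg hlam.le (mul_nonneg (Real.sqrt_nonneg η) (sub_nonneg.2 hse))]
    have hg := le_gronwallBound_of_liminf_deriv_right_le hfcont
      (fun x hx r hr => (hfderiv' x hx).liminf_right_slope_le hr)
      (le_refl (Real.sqrt (V 0 + η))) hfbound T ⟨hT, le_refl T⟩
    rw [gronwallBound_of_K_ne_0 (by linarith : (-lam) ≠ 0)] at hg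
    simp only [sub_zero] at hg
    have hexp : Real.exp (-lam * T) ≤ 1 := Real.exp_le_one_iff.2 (by nlinarith)
    have hexp0 : 0 < Real.exp (-lam * T) := Real.exp_pos _
    have hE : 0 ≤ A + lam * Real.sqrt η := by positivity
    have h2 : Real.sqrt (V 0 + η) * Real.exp (-lam * T) +
        (A + lam * Real.sqrt η) / (-lam) * (Real.exp (-lam * T) - 1)
        ≤ Real.sqrt (V 0 + η) * Real.exp (-lam * T) + (A + lam * Real.sqrt η) / lam := by
      have he : (A + lam * Real.sqrt η) / (-lam) * (Real.exp (-lam * T) - 1)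
          = (A + lam * Real.sqrt η) / lam * (1 - Real.exp (-lam * T)) := by
        field_simp [hlam.ne']
        ring
      rw [he]
      have hd0 : 0 ≤ (A + lam * Real.sqrt η) / lam := by positivity
      nlinarith
    have h3 : Real.sqrt (V 0 + η) ≤ Real.sqrt (V 0) + Real.sqrt η := by
      have hV0 := hVnn 0 le_rfl
      have hsum : V 0 + η ≤ (Real.sqrt (V 0) + Real.sqrt η) ^ 2 := by
        nlinarith [Real.sq_sqrt hV0, Real.sq_sqrt hη.le, Real.sqrt_nonneg (V 0),
          Real.sqrt_nonneg η]
      calc Real.sqrt (V 0 + η) ≤ Real.sqrt ((Real.sqrt (V 0) + Real.sqrt η) ^ 2) :=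
            Real.sqrt_le_sqrt hsum
        _ = Real.sqrt (V 0) + Real.sqrt η := Real.sqrt_sq (by positivity)
    have h4 : Real.sqrt (V T) ≤ Real.sqrt (V T + η) := Real.sqrt_le_sqrt (by linarith)
    have h5 : (A + lam * Real.sqrt η) / lam = A / lam + Real.sqrt η := by
      field_simp
    calc Real.sqrt (V T) ≤ Real.sqrt (V T + η) := h4
      _ ≤ Real.sqrt (V 0 + η) * Real.exp (-lam * T) +
          (A + lam * Real.sqrt η) / (-lam) * (Real.exp (-lam * T) - 1) := hg
      _ ≤ Real.sqrt (V 0 + η) * Real.exp (-lam * T) + (A + lam * Real.sqrt η) / lam := h2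
      _ ≤ (Real.sqrt (V 0) + Real.sqrt η) * Real.exp (-lam * T)
          + (A / lam + Real.sqrt η) := by
          rw [h5]
          have := Real.sqrt_nonneg (V 0 + η)
          nlinarith
      _ ≤ Real.exp (-lam * T) * Real.sqrt (V 0) + A / lam + 2 * Real.sqrt η := by
          nlinarith [Real.sqrt_nonneg η]
  apply le_of_forall_pos_le_add
  intro c hc
  have hη : (0 : ℝ) < (c / 2) ^ 2 := by positivity
  have hk := key ((c / 2) ^ 2) hη
  have hs : Real.sqrt ((c / 2) ^ 2) = c / 2 := Real.sqrt_sq (by positivity)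
  rw [hs] at hk
  linarith


theorem ccm_tube_bound
    (n : ℕ) (hn : 0 < n) (lam ε mlo mhi : ℝ)
    (hlam : 0 < lam) (hε : 0 ≤ ε) (hmlo : 0 < mlo) (hm : mlo ≤ mhi)
    (M M' : ℝ → Matrix (Fin n) (Fin n) ℝ)
    (hMsymm : ∀ t, 0 ≤ t → (M t).IsSymm)
    (hMderiv : ∀ t, 0 ≤ t → ∀ i j,
      HasDerivWithinAt (fun s => M s i j) (M' t i j) (Set.Ici (0 : ℝ)) t)
    (hMlo : ∀ t, 0 ≤ t → (M t - mlo • (1 : Matrix (Fin n) (Fin n) ℝ)).PosSemidef)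
    (hMhi : ∀ t, 0 ≤ t → (mhi • (1 : Matrix (Fin n) (Fin n) ℝ) - M t).PosSemidef)
    (𝒜 : ℝ → Matrix (Fin n) (Fin n) ℝ)
    (hcontr : ∀ t, 0 ≤ t →
      ((-(2 * lam)) • M t - (M t * 𝒜 t + (𝒜 t)ᵀ * M t + M' t)).PosSemidef)
    (δ d : ℝ → Fin n → ℝ)
    (hd : ∀ t, 0 ≤ t → euclNorm (d t) ≤ ε)
    (hδ : ∀ t, 0 ≤ t → HasDerivWithinAt δ (𝒜 t *ᵥ δ t + d t) (Set.Ici (0 : ℝ)) t) :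
    ∀ t, 0 ≤ t →
      euclNorm (δ t) ≤
        Real.sqrt (mhi / mlo) * (Real.exp (-lam * t) * euclNorm (δ 0) + ε / lam) := by
  classical
  intro T hT
  set δ' : ℝ → Fin n → ℝ := fun t => 𝒜 t *ᵥ δ t + d t with hδ'def
  set V : ℝ → ℝ := fun t => δ t ⬝ᵥ (M t *ᵥ δ t) with hVdef
  set V' : ℝ → ℝ := fun t =>
    δ' t ⬝ᵥ (M t *ᵥ δ t) + δ t ⬝ᵥ (M' t *ᵥ δ t) + δ t ⬝ᵥ (M t *ᵥ δ' t) with hV'def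
  have hmhi : 0 < mhi := lt_of_lt_of_le hmlo hm
  -- basic positivity facts
  have hMpsd : ∀ t, 0 ≤ t → (M t).PosSemidef := by
    intro t ht
    refine PosSemidef.of_dotProduct_mulVec_nonneg ?_ ?_
    · have h := hMsymm t ht
      ext i j
      simpa using congrFun (congrFun h i) j
    · intro x
      have h := psd_dot_nonneg (hMlo t ht) x
      have hx : 0 ≤ x ⬝ᵥ x := dot_self_nonneg x
      simp only [sub_mulVec, dotProduct_sub, smul_mulVec, one_mulVec,
        dotProduct_smul, smul_eq_mul] at h
      have : 0 ≤ x ⬝ᵥ (M t *ᵥ x) := by nlinarith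
      simpa using this
  have hVlo : ∀ t, 0 ≤ t → mlo * (δ t ⬝ᵥ δ t) ≤ V t := by
    intro t ht
    have h := psd_dot_nonneg (hMlo t ht) (δ t)
    simp only [sub_mulVec, dotProduct_sub, smul_mulVec, one_mulVec,
      dotProduct_smul, smul_eq_mul] at h
    simp only [hVdef]
    linarith
  have hVhi : ∀ t, 0 ≤ t → V t ≤ mhi * (δ t ⬝ᵥ δ t) := by
    intro t ht
    have h := psd_dot_nonneg (hMhi t ht) (δ t)
    simp only [sub_mulVec, dotProduct_sub, smul_mulVec, one_mulVec,
      dotProduct_smul, smul_eq_mul] at h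
    simp only [hVdef]
    linarith
  have hVnn : ∀ t, 0 ≤ t → 0 ≤ V t := fun t ht => psd_dot_nonneg (hMpsd t ht) (δ t)
  -- componentwise derivative of δ
  have hδc : ∀ t, 0 ≤ t → ∀ i,
      HasDerivWithinAt (fun s => δ s i) (δ' t i) (Set.Ici (0 : ℝ)) t := by
    intro t ht i
    exact (ContinuousLinearMap.proj (R := ℝ) (φ := fun _ : Fin n => ℝ)
      i).hasFDerivAt.comp_hasDerivWithinAt t (hδ t ht)
  -- derivative of V
  have hVderiv : ∀ t, 0 ≤ t → HasDerivWithinAt V (V' t) (Set.Ici (0 : ℝ)) t := by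
    intro t ht
    have h : HasDerivWithinAt (fun s => ∑ i, ∑ j, δ s i * (M s i j * δ s j))
        (∑ i, ∑ j, (δ' t i * (M t i j * δ t j) +
          δ t i * (M' t i j * δ t j + M t i j * δ' t j))) (Set.Ici (0 : ℝ)) t := by
      apply HasDerivWithinAt.fun_sum
      intro i _
      apply HasDerivWithinAt.fun_sum
      intro j _
      exact (hδc t ht i).mul ((hMderiv t ht i j).mul (hδc t ht j))
    have hfun : V = fun s => ∑ i, ∑ j, δ s i * (M s i j * δ s j) := by
      funext s
      simp [hVdef, dotProduct, mulVec, Finset.mul_sum]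
    have hval : V' t = ∑ i, ∑ j, (δ' t i * (M t i j * δ t j) +
        δ t i * (M' t i j * δ t j + M t i j * δ' t j)) := by
      simp only [hV'def, dotProduct, mulVec, Finset.mul_sum, mul_add,
        Finset.sum_add_distrib]
      ring
    rw [hfun, hval]
    exact h
  -- bound on V'
  have hbound : ∀ t, 0 ≤ t →
      V' t ≤ -(2 * lam) * V t + 2 * (Real.sqrt mhi * ε) * Real.sqrt (V t) := by
    intro t ht
    -- contraction part
    have hq := psd_dot_nonneg (hcontr t ht) (δ t)
    simp only [sub_mulVec, dotProduct_sub, smul_mulVec, dotProduct_smul,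
      smul_eq_mul, add_mulVec, dotProduct_add] at hq
    -- rewrite transposes
    have e1 : δ t ⬝ᵥ ((M t * 𝒜 t) *ᵥ δ t) = δ t ⬝ᵥ (M t *ᵥ (𝒜 t *ᵥ δ t)) := by
      rw [mulVec_mulVec]
    have e2 : δ t ⬝ᵥ (((𝒜 t)ᵀ * M t) *ᵥ δ t) = (𝒜 t *ᵥ δ t) ⬝ᵥ (M t *ᵥ δ t) := by
      rw [← mulVec_mulVec, dotProduct_mulVec, vecMul_transpose]
    have e3 : d t ⬝ᵥ (M t *ᵥ δ t) = δ t ⬝ᵥ (M t *ᵥ d t) := by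
      rw [dotProduct_mulVec, ← mulVec_transpose, hMsymm t ht, dotProduct_comm]
    -- disturbance part
    set b : ℝ := δ t ⬝ᵥ (M t *ᵥ d t) with hbdef
    have hVt := hVnn t ht
    have hcsb : b ^ 2 ≤ V t * (mhi * ε ^ 2) := by
      have h1 := dot_cs (hMpsd t ht) (δ t) (d t)
      have h2 := psd_dot_nonneg (hMhi t ht) (d t)
      simp only [sub_mulVec, dotProduct_sub, smul_mulVec, one_mulVec,
        dotProduct_smul, smul_eq_mul] at h2
      have h3 : Real.sqrt (d t ⬝ᵥ d t) ≤ ε := hd t ht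
      have h4 : 0 ≤ d t ⬝ᵥ d t := dot_self_nonneg (d t)
      have h5 : d t ⬝ᵥ d t ≤ ε ^ 2 := by
        nlinarith [Real.sq_sqrt h4, Real.sqrt_nonneg (d t ⬝ᵥ d t),
          mul_nonneg (sub_nonneg.2 h3) (add_nonneg hε (Real.sqrt_nonneg (d t ⬝ᵥ d t)))]
      have hVt' : δ t ⬝ᵥ (M t *ᵥ δ t) = V t := rfl
      rw [hVt'] at h1
      nlinarith [mul_nonneg hVt (sub_nonneg.2 h5), mul_nonneg h4 hmhi.le,
        mul_le_mul_of_nonneg_left h5 (mul_nonneg hVt hmhi.le)]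
    have hble : b ≤ Real.sqrt mhi * ε * Real.sqrt (V t) := by
      have hX : 0 ≤ Real.sqrt mhi * ε * Real.sqrt (V t) := by positivity
      have hX2 : (Real.sqrt mhi * ε * Real.sqrt (V t)) ^ 2 = mhi * ε ^ 2 * V t := by
        rw [mul_pow, mul_pow, Real.sq_sqrt hmhi.le, Real.sq_sqrt hVt]
        try ring
      nlinarith
    -- combine
    have expand : V' t = δ t ⬝ᵥ (((𝒜 t)ᵀ * M t) *ᵥ δ t) + δ t ⬝ᵥ (M' t *ᵥ δ t)
        + δ t ⬝ᵥ ((M t * 𝒜 t) *ᵥ δ t) + 2 * b := by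
      have h0 : V' t = (𝒜 t *ᵥ δ t) ⬝ᵥ (M t *ᵥ δ t) + d t ⬝ᵥ (M t *ᵥ δ t)
          + δ t ⬝ᵥ (M' t *ᵥ δ t)
          + (δ t ⬝ᵥ (M t *ᵥ (𝒜 t *ᵥ δ t)) + δ t ⬝ᵥ (M t *ᵥ d t)) := by
        simp only [hV'def, hδ'def, add_dotProduct, dotProduct_add, mulVec_add]
        try ring
      rw [h0, ← e2, e3, ← e1]
      try ring
    rw [expand]
    have hVt' : δ t ⬝ᵥ (M t *ᵥ δ t) = V t := rfl
    linarith [hble, hq, hVt'.ge, hVt'.le]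
  have keylim : Real.sqrt (V T) ≤ Real.exp (-lam * T) * Real.sqrt (V 0)
      + Real.sqrt mhi * ε / lam := by
    have := sqrt_tube (A := Real.sqrt mhi * ε) (T := T) hlam
      (by positivity) hT hVnn hVderiv ?_
    · exact this
    · intro t ht
      have := hbound t ht
      linarith [this]
  -- final assembly
  have hnnT : 0 ≤ δ T ⬝ᵥ δ T := dot_self_nonneg (δ T)
  have hnn0 : 0 ≤ δ 0 ⬝ᵥ δ 0 := dot_self_nonneg (δ 0)
  have h1 : Real.sqrt mlo * euclNorm (δ T) ≤ Real.sqrt (V T) := by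
    rw [show euclNorm (δ T) = Real.sqrt (δ T ⬝ᵥ δ T) from rfl, ← Real.sqrt_mul hmlo.le]
    exact Real.sqrt_le_sqrt (hVlo T hT)
  have h2 : Real.sqrt (V 0) ≤ Real.sqrt mhi * euclNorm (δ 0) := by
    rw [show euclNorm (δ 0) = Real.sqrt (δ 0 ⬝ᵥ δ 0) from rfl, ← Real.sqrt_mul hmhi.le]
    exact Real.sqrt_le_sqrt (hVhi 0 le_rfl)
  have hmlos : 0 < Real.sqrt mlo := Real.sqrt_pos.2 hmlo
  have hexp0 : 0 < Real.exp (-lam * T) := Real.exp_pos _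
  have hN0 : 0 ≤ euclNorm (δ 0) := Real.sqrt_nonneg _
  have hfin : euclNorm (δ T) ≤ (Real.exp (-lam * T) * (Real.sqrt mhi * euclNorm (δ 0))
      + Real.sqrt mhi * ε / lam) / Real.sqrt mlo := by
    rw [le_div_iff₀ hmlos]
    calc euclNorm (δ T) * Real.sqrt mlo = Real.sqrt mlo * euclNorm (δ T) := mul_comm _ _
      _ ≤ Real.sqrt (V T) := h1
      _ ≤ Real.exp (-lam * T) * Real.sqrt (V 0) + Real.sqrt mhi * ε / lam := keylim
      _ ≤ Real.exp (-lam * T) * (Real.sqrt mhi * euclNorm (δ 0))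
          + Real.sqrt mhi * ε / lam := by nlinarith
  refine le_trans hfin (le_of_eq ?_)
  rw [Real.sqrt_div hmhi.le mlo]
  field_simp
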